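/- For every natural number n and every α ∈ [0, π/6], define Φ_n(α) = ((√3/2)·cos α + (1/2)·sin α)·((√3/2)·sin α − (1/2)·cos α)^{2n+1} + ((√3/2)·cos α − (1/2)·sin α)·((√3/2)·sin α + (1/2)·cos α)^{2n+1} − sin α·(cos α)^{2n+1}. Then: Φ_n(α) = 0 for all α ∈ [0, π/6] when n = 0 or n = 1; Φ_n(0) = Φ_n(π/6) = 0 for every n ≥ 2; and Φ_n(α) < 0 for every α ∈ (0, π/6) and every n ≥ 2. -/
import Mathlib


open Real Set

/-- The expression Φ_n(α) from Lemma 4.1. -/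
noncomputable def Phi (n : ℕ) (α : ℝ) : ℝ :=
  (Real.sqrt 3 / 2 * Real.cos α + 1/2 * Real.sin α) *
      (Real.sqrt 3 / 2 * Real.sin α - 1/2 * Real.cos α) ^ (2*n+1)
    + (Real.sqrt 3 / 2 * Real.cos α - 1/2 * Real.sin α) *
      (Real.sqrt 3 / 2 * Real.sin α + 1/2 * Real.cos α) ^ (2*n+1)
    - Real.sin α * (Real.cos α) ^ (2*n+1)

lemma key_ineq (p v : ℝ) (hp : 0 < p) (hpv : p < v) : ∀ k : ℕ,
    (2*p+v)*v^(k+5) < (p+2*v)*p^(k+5) + (v-p)*(p+v)^(k+5) := by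
  have hv : 0 < v := hp.trans hpv
  intro k
  induction k with
  | zero =>
    have hq : 0 < 2*v^3+7*p*v^2+7*p^2*v+2*p^3 := by
      nlinarith [pow_pos hp 3, pow_pos hv 3, mul_pos hp (mul_pos hv hv),
        mul_pos (mul_pos hp hp) hv]
    have h5 : 0 < v*(p*((v-p)*(2*v^3+7*p*v^2+7*p^2*v+2*p^3))) :=
      mul_pos hv (mul_pos hp (mul_pos (sub_pos.2 hpv) hq))
    simp only [Nat.zero_add]
    nlinarith [h5]
  | succ k ih =>
    have haux : (2*p+v)*v^(k+5) < v*(p+v)^(k+5) := by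
      have h1 : v^(k+3) ≤ (p+v)^(k+3) := pow_le_pow_left₀ hv.le (by linarith) _
      have hnn : (0:ℝ) ≤ v*(p+v)^2 := mul_nonneg hv.le (sq_nonneg _)
      have h4 := mul_le_mul_of_nonneg_left h1 hnn
      have h6 : 0 < p*p*(v*v^(k+3)) :=
        mul_pos (mul_pos hp hp) (mul_pos hv (pow_pos hv (k+3)))
      have e : ∀ x:ℝ, x^(k+5) = x^(k+3)*x^2 := fun x => by ring
      rw [e, e]
      nlinarith [h4, h6]
    have h2 := mul_lt_mul_of_pos_left ih hp
    have h3 := mul_lt_mul_of_pos_left haux (sub_pos.2 hpv)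
    have e : ∀ x:ℝ, x^(k+1+5) = x*x^(k+5) := fun x => by ring
    rw [e, e, e]
    nlinarith [h2, h3]

lemma bridge (r s c : ℝ) (hr : r*r = 3) (n : ℕ) :
    r * ((r/2*c + 1/2*s) * (r/2*s - 1/2*c)^(2*n+1)
      + (r/2*c - 1/2*s) * (r/2*s + 1/2*c)^(2*n+1) - s*c^(2*n+1))
    = (2*((c-r*s)/2)+((r*s+c)/2))*((r*s+c)/2)^(2*n+1)
      - (((c-r*s)/2)+2*((r*s+c)/2))*((c-r*s)/2)^(2*n+1)
      - (((r*s+c)/2)-((c-r*s)/2))*c^(2*n+1) := by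
  have e1 : r/2*s - 1/2*c = -((c-r*s)/2) := by ring
  have e2 : r/2*s + 1/2*c = (r*s+c)/2 := by ring
  rw [e1, e2, Odd.neg_pow ⟨n, by ring⟩]
  linear_combination (c/2*(((r*s+c)/2)^(2*n+1) - ((c-r*s)/2)^(2*n+1))) * hr

theorem stmt9 :
    (∀ n : ℕ, n = 0 ∨ n = 1 → ∀ α ∈ Set.Icc (0:ℝ) (Real.pi/6), Phi n α = 0) ∧
    (∀ n : ℕ, 2 ≤ n → Phi n 0 = 0 ∧ Phi n (Real.pi/6) = 0) ∧
    (∀ n : ℕ, 2 ≤ n → ∀ α ∈ Set.Ioo (0:ℝ) (Real.pi/6), Phi n α < 0) := by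
  have hsq3 : Real.sqrt 3 * Real.sqrt 3 = 3 := Real.mul_self_sqrt (by norm_num)
  have hs3pos : (0:ℝ) < Real.sqrt 3 := Real.sqrt_pos.2 (by norm_num)
  refine ⟨?_, ?_, ?_⟩
  · rintro n (rfl | rfl) α _
    · simp only [Phi]
      norm_num
      linear_combination (1/2 * Real.sin α * Real.cos α) * hsq3
    · simp only [Phi]
      norm_num
      linear_combination (3/8 * Real.sin α * Real.cos α^3
        + 1/8 * (Real.sqrt 3 * Real.sqrt 3) * Real.sin α^3 * Real.cos α) * hsq3
  · intro n _
    constructor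
    · simp only [Phi, Real.sin_zero, Real.cos_zero]
      rw [show Real.sqrt 3 / 2 * (0:ℝ) - 1/2 * 1 = -(1/2) from by ring,
        show Real.sqrt 3 / 2 * (0:ℝ) + 1/2 * 1 = (1/2 : ℝ) from by ring,
        Odd.neg_pow ⟨n, by ring⟩]
      ring
    · simp only [Phi, Real.sin_pi_div_six, Real.cos_pi_div_six]
      rw [show Real.sqrt 3 / 2 * (1/2 : ℝ) - 1/2 * (Real.sqrt 3/2) = 0 from by ring,
        zero_pow (by omega : 2*n+1 ≠ 0),
        show Real.sqrt 3 / 2 * (1/2 : ℝ) + 1/2 * (Real.sqrt 3/2) = Real.sqrt 3/2 from by ring]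
      linear_combination ((Real.sqrt 3/2)^(2*n+1)/4) * hsq3
  · intro n hn α hα
    obtain ⟨hα0, hα6⟩ := hα
    obtain ⟨k, rfl⟩ : ∃ k, n = k + 2 := ⟨n - 2, by omega⟩
    have hpi : (0:ℝ) < Real.pi := Real.pi_pos
    set s := Real.sin α with hs
    set c := Real.cos α with hc
    set p := (c - Real.sqrt 3 * s)/2 with hp
    set v := (Real.sqrt 3 * s + c)/2 with hv
    have hp_sin : p = Real.sin (Real.pi/6 - α) := by
      rw [Real.sin_sub, Real.sin_pi_div_six, Real.cos_pi_div_six, hp, hs, hc]; ring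
    have hp_pos : 0 < p := by
      rw [hp_sin]
      apply Real.sin_pos_of_pos_of_lt_pi <;> [linarith; nlinarith]
    have hsin_pos : 0 < s := by
      rw [hs]
      apply Real.sin_pos_of_pos_of_lt_pi hα0
      nlinarith
    have hpv : p < v := by
      have : v - p = Real.sqrt 3 * s := by rw [hp, hv]; ring
      nlinarith [mul_pos hs3pos hsin_pos]
    have hkey := key_ineq p v hp_pos hpv (2*k)
    have hb := bridge (Real.sqrt 3) s c hsq3 (k+2)
    have hb' : Real.sqrt 3 * Phi (k+2) α
        = (2*p+v)*v^(2*(k+2)+1) - (p+2*v)*p^(2*(k+2)+1) - (v-p)*(p+v)^(2*(k+2)+1) := by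
      have hpv_c : p + v = c := by rw [hp, hv]; ring
      rw [hpv_c]
      simp only [Phi, ← hs, ← hc]
      convert hb using 3 <;> rw [hp] <;> try rw [hv]
    have hm : 2*(k+2)+1 = 2*k+5 := by ring
    rw [hm] at hb'
    nlinarith [hb', hkey, hs3pos]
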